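/- If two disjoint clusters a and b have no edge between them and to a third disjoint cluster c both distances d(a,c) and d(b,c) are finite, then d(a∪b,c) is a convex-weight harmonic combination which simplifies: since p(a∪b,c) = p(a,c) + p(b,c), d(a∪b,c) = (p(a)+p(b))·p(c)/(p(a,c)+p(b,c)), and this is strictly greater than min(d(a,c), d(b,c)) whenever d(a,c) ≠ d(b,c). -/

import Mathlib

open Finset

variable {V : Type*} [Fintype V] [DecidableEq V]

/-- Total weight of the graph. -/
noncomputable def totalW (A : V → V → ℝ) : ℝ := ∑ i, ∑ j, A i j

/-- Joint sampling probability of a node pair. -/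
noncomputable def pN (A : V → V → ℝ) (i j : V) : ℝ := A i j / totalW A

/-- Marginal sampling probability of a node. -/
noncomputable def pMarg (A : V → V → ℝ) (i : V) : ℝ := ∑ j, pN A i j

/-- Pair-sampling probability of two clusters. -/
noncomputable def pPair (A : V → V → ℝ) (a b : Finset V) : ℝ :=
  ∑ i ∈ a, ∑ j ∈ b, pN A i j

/-- Marginal probability of a cluster. -/
noncomputable def pClus (A : V → V → ℝ) (a : Finset V) : ℝ :=
  ∑ i ∈ a, pMarg A i

/-- Distance between clusters. -/
noncomputable def dClus (A : V → V → ℝ) (a b : Finset V) : ℝ :=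
  pClus A a * pClus A b / pPair A a b

/-- `C` is a partition of `V`: pairwise disjoint nonempty clusters covering `V`. -/
def IsPartition (C : Finset (Finset V)) : Prop :=
  (∀ a ∈ C, a.Nonempty) ∧
  (∀ a ∈ C, ∀ b ∈ C, a ≠ b → Disjoint a b) ∧
  C.biUnion id = Finset.univ

/-- If there is no edge between disjoint clusters `a` and `b`, the merged distance to `c`
simplifies, and is strictly above `min(d(a,c), d(b,c))` when the two distances differ. -/
theorem merge_no_edge (A : V → V → ℝ)
    (hsym : ∀ i j, A i j = A j i) (hnn : ∀ i j, 0 ≤ A i j) (hw : 0 < totalW A)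
    (a b c : Finset V)
    (hab : Disjoint a b) (hac : Disjoint a c) (hbc : Disjoint b c)
    (hpa : 0 < pClus A a) (hpb : 0 < pClus A b) (hpc : 0 < pClus A c)
    (hpac : 0 < pPair A a c) (hpbc : 0 < pPair A b c)
    (hnoedge : pPair A a b = 0) :
    dClus A (a ∪ b) c = (pClus A a + pClus A b) * pClus A c / (pPair A a c + pPair A b c) ∧
    (dClus A a c ≠ dClus A b c →
      min (dClus A a c) (dClus A b c) < dClus A (a ∪ b) c) := by
  have hP : pClus A (a ∪ b) = pClus A a + pClus A b := Finset.sum_union hab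
  have hPair : pPair A (a ∪ b) c = pPair A a c + pPair A b c := Finset.sum_union hab
  have heq : dClus A (a ∪ b) c
      = (pClus A a + pClus A b) * pClus A c / (pPair A a c + pPair A b c) := by
    rw [dClus, hP, hPair]
  refine ⟨heq, fun hne => ?_⟩
  set P := pClus A a; set R := pClus A b; set Q := pClus A c
  set x := pPair A a c; set y := pPair A b c
  have hxy : 0 < x + y := by linarith
  have hd1 : dClus A a c = P * Q / x := rfl
  have hd2 : dClus A b c = R * Q / y := rfl
  rw [hd1, hd2] at hne ⊢
  rcases lt_or_gt_of_ne hne with h | h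
  · rw [min_eq_left h.le, heq, div_lt_div_iff₀ hpac hxy]
    rw [div_lt_div_iff₀ hpac hpbc] at h
    nlinarith
  · rw [min_eq_right h.le, heq, div_lt_div_iff₀ hpbc hxy]
    rw [div_lt_div_iff₀ hpbc hpac] at h
    nlinarith
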